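/- Let N ≥ 1 and let u₁,…,u_N, η₁,…,η_N : ℝ² → ℝ be smooth functions of (x,t) satisfying the dispersionless vector nonlinear Schrödinger system ∂_t u_i = ∂_x[u_i²/2 + Σ_{k=1}^N η_k] and ∂_t η_i = ∂_x(u_i η_i) for every i = 1,…,N. Define A_k := Σ_{i=1}^N u_i^k η_i for k = 0, 1, 2, …. Then the Benney momentum chain holds: ∂_t A_k = ∂_x A_{k+1} + k A_{k−1} ∂_x A₀ for every k ≥ 0, where for k = 0 the term k A_{k−1} ∂_x A₀ is zero. -/

import Mathlib

open Real Set

/-- Partial derivative in the first variable. -/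
noncomputable def pdx (f : ℝ → ℝ → ℝ) (x t : ℝ) : ℝ := deriv (fun x' => f x' t) x

/-- Partial derivative in the second variable. -/
noncomputable def pdt (f : ℝ → ℝ → ℝ) (x t : ℝ) : ℝ := deriv (fun t' => f x t') t

/-- The Zakharov reduction: solutions of the dispersionless vector NLS system
`∂ₜ uᵢ = ∂ₓ[uᵢ²/2 + Σ η_k]`, `∂ₜ ηᵢ = ∂ₓ(uᵢηᵢ)` give moments `A_k = Σ uᵢᵏ ηᵢ`
satisfying the Benney chain `∂ₜ A_k = ∂ₓ A_{k+1} + k A_{k−1} ∂ₓ A₀`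
(the last term being zero for `k = 0`). -/
lemma diffx (f : ℝ → ℝ → ℝ) (hf : ContDiff ℝ (⊤ : ℕ∞) (Function.uncurry f)) (x t : ℝ) :
    DifferentiableAt ℝ (fun x' => f x' t) x := by
  have : Differentiable ℝ (fun x' : ℝ => Function.uncurry f (x', t)) :=
    (hf.differentiable (by simp)).comp (differentiable_id.prodMk (differentiable_const t))
  exact this.differentiableAt

lemma difft (f : ℝ → ℝ → ℝ) (hf : ContDiff ℝ (⊤ : ℕ∞) (Function.uncurry f)) (x t : ℝ) :
    DifferentiableAt ℝ (fun t' => f x t') t := by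
  have : Differentiable ℝ (fun t' : ℝ => Function.uncurry f (x, t')) :=
    (hf.differentiable (by simp)).comp ((differentiable_const x).prodMk differentiable_id)
  exact this.differentiableAt

theorem zakharov_reduction_satisfies_benney_chain
    (N : ℕ) (hN : 1 ≤ N) (u η : Fin N → ℝ → ℝ → ℝ)
    (hu : ∀ i, ContDiff ℝ (⊤ : ℕ∞) (Function.uncurry (u i)))
    (hη : ∀ i, ContDiff ℝ (⊤ : ℕ∞) (Function.uncurry (η i)))
    (h1 : ∀ (i : Fin N) (x t : ℝ),
      pdt (u i) x t = pdx (fun x' t' => (u i x' t') ^ 2 / 2 + ∑ k, η k x' t') x t)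
    (h2 : ∀ (i : Fin N) (x t : ℝ),
      pdt (η i) x t = pdx (fun x' t' => u i x' t' * η i x' t') x t)
    (A : ℕ → ℝ → ℝ → ℝ)
    (hA : ∀ (k : ℕ) (x t : ℝ), A k x t = ∑ i, (u i x t) ^ k * η i x t) :
    ∀ (k : ℕ) (x t : ℝ),
      pdt (A k) x t = pdx (A (k + 1)) x t + (k : ℝ) * A (k - 1) x t * pdx (A 0) x t := by
  intro k x t
  -- basic derivatives as HasDerivAt
  have hux : ∀ i, HasDerivAt (fun x' => u i x' t) (pdx (u i) x t) x :=
    fun i => (diffx (u i) (hu i) x t).hasDerivAt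
  have hηx : ∀ i, HasDerivAt (fun x' => η i x' t) (pdx (η i) x t) x :=
    fun i => (diffx (η i) (hη i) x t).hasDerivAt
  have hut : ∀ i, HasDerivAt (fun t' => u i x t') (pdt (u i) x t) t :=
    fun i => (difft (u i) (hu i) x t).hasDerivAt
  have hηt : ∀ i, HasDerivAt (fun t' => η i x t') (pdt (η i) x t) t :=
    fun i => (difft (η i) (hη i) x t).hasDerivAt
  set ux : Fin N → ℝ := fun i => pdx (u i) x t with hux_def
  set ηx : Fin N → ℝ := fun i => pdx (η i) x t with hηx_def
  set ut : Fin N → ℝ := fun i => pdt (u i) x t with hut_def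
  set ηt : Fin N → ℝ := fun i => pdt (η i) x t with hηt_def
  -- rewrite h1, h2 into explicit form
  have H1 : ∀ i, ut i = u i x t * ux i + ∑ j, ηx j := by
    intro i
    have hd : HasDerivAt (fun x' => (u i x' t) ^ 2 / 2 + ∑ j, η j x' t)
        ((2 : ℕ) * (u i x t) ^ 1 * ux i / 2 + ∑ j, ηx j) x := by
      exact (((hux i).pow 2).div_const 2).add (HasDerivAt.fun_sum fun j _ => hηx j)
    have := h1 i x t
    rw [show pdx (fun x' t' => (u i x' t') ^ 2 / 2 + ∑ k, η k x' t') x t =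
        deriv (fun x' => (u i x' t) ^ 2 / 2 + ∑ j, η j x' t) x from rfl, hd.deriv] at this
    rw [show ut i = pdt (u i) x t from rfl, this]; push_cast; ring
  have H2 : ∀ i, ηt i = ux i * η i x t + u i x t * ηx i := by
    intro i
    have hd : HasDerivAt (fun x' => u i x' t * η i x' t)
        (ux i * η i x t + u i x t * ηx i) x := (hux i).mul (hηx i)
    have := h2 i x t
    rw [show pdx (fun x' t' => u i x' t' * η i x' t') x t =
        deriv (fun x' => u i x' t * η i x' t) x from rfl, hd.deriv] at this
    rw [show ηt i = pdt (η i) x t from rfl]; exact this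
  -- compute pdt (A k)
  have hAfun : ∀ m, A m = fun x t => ∑ i, (u i x t) ^ m * η i x t := by
    intro m; funext x t; exact hA m x t
  have LHS : pdt (A k) x t
      = ∑ i, (((k : ℝ) * (u i x t) ^ (k - 1) * ut i) * η i x t + (u i x t) ^ k * ηt i) := by
    rw [hAfun k]
    have hd : HasDerivAt (fun t' => ∑ i, (u i x t') ^ k * η i x t')
        (∑ i, (((k : ℝ) * (u i x t) ^ (k - 1) * ut i) * η i x t + (u i x t) ^ k * ηt i)) t :=
      HasDerivAt.fun_sum fun i _ => ((hut i).pow k).mul (hηt i)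
    exact hd.deriv
  have RHS1 : pdx (A (k + 1)) x t
      = ∑ i, ((((k : ℝ) + 1) * (u i x t) ^ k * ux i) * η i x t + (u i x t) ^ (k + 1) * ηx i) := by
    rw [hAfun (k + 1)]
    have hd : HasDerivAt (fun x' => ∑ i, (u i x' t) ^ (k + 1) * η i x' t)
        (∑ i, ((((k : ℝ) + 1) * (u i x t) ^ k * ux i) * η i x t + (u i x t) ^ (k + 1) * ηx i)) x := by
      have := HasDerivAt.fun_sum (fun i (_ : i ∈ Finset.univ) => ((hux i).pow (k + 1)).mul (hηx i))
      convert this using 2 with i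
      · rfl
      · rfl
      · rfl
      push_cast; simp
      rfl
    exact hd.deriv
  have RHS0 : pdx (A 0) x t = ∑ j, ηx j := by
    rw [hAfun 0]
    have hd : HasDerivAt (fun x' => ∑ i, (u i x' t) ^ 0 * η i x' t) (∑ j, ηx j) x := by
      have := HasDerivAt.fun_sum (fun i (_ : i ∈ Finset.univ) => ((hux i).pow 0).mul (hηx i))
      convert this using 2 with i
      · rfl
      · rfl
      · rfl
      simp
      rfl
    exact hd.deriv
  rw [LHS, RHS1, RHS0, hA (k - 1)]
  rw [Finset.sum_congr rfl (fun i _ => by rw [H1 i, H2 i])]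
  rw [mul_assoc, Finset.sum_mul, Finset.mul_sum, ← Finset.sum_add_distrib]
  refine Finset.sum_congr rfl fun i _ => ?_
  cases k with
  | zero => simp
  | succ n =>
    simp only [Nat.add_sub_cancel]
    push_cast
    ring_nf
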